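/- Let M, N, N₁ be positive integers, and for n₁ = 1, …, N₁ let h_{n₁} ∈ ℂ^M and ζ_{n₁} ≥ 0, with σ_a ∈ ℝ and P ≥ 0. Define p_{n₁}(w) = Σ_{η=1}^{N} |h_{n₁}^H w_η|² + σ_a² and F(w, α) = Σ_{n₁=1}^{N₁} ζ_{n₁}(1 − α_{n₁}²)·p_{n₁}(w). Suppose (w^{(κ)}, α^{(κ)})_{κ ∈ ℕ} is a sequence with α^{(κ)} ∈ (0,1)^{N₁} and Σ_{n=1}^{N} ‖w_n^{(κ)}‖² ≤ P for every κ, such that for each κ the surrogate F^{(κ)}(w, α) = Σ_{n₁} ζ_{n₁}·p̆_{n₁}^{(κ)}(w, α_{n₁}) built at (w^{(κ)}, α^{(κ)}) satisfies F^{(κ)}(w^{(κ+1)}, α^{(κ+1)}) ≥ F^{(κ)}(w^{(κ)}, α^{(κ)}). Then the real sequence (F(w^{(κ)}, α^{(κ)}))_{κ ∈ ℕ} is nondecreasing, bounded above by Σ_{n₁=1}^{N₁} ζ_{n₁}(‖h_{n₁}‖²·P + σ_a²), and hence converges. -/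

import Mathlib

/-- Hermitian inner product `h^H w = ∑ i, conj (h i) * w i` on `ℂ^M`
(conjugate-linear in `h`). -/
noncomputable def hermInner {M : ℕ} (h w : Fin M → ℂ) : ℂ :=
  ∑ i, (starRingEnd ℂ) (h i) * w i

/-- Total received RF power `p(w) = ∑ η, |h^H w_η|² + σa²`. -/
noncomputable def rfPower {M N : ℕ} (h : Fin M → ℂ) (σa : ℝ)
    (w : Fin N → Fin M → ℂ) : ℝ :=
  (∑ η, ‖hermInner h (w η)‖ ^ 2) + σa ^ 2

/-- Surrogate (minorant) of the harvested energy `(1 - α²) p(w)` obtained by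
linearization at the point `(wh, αh)`. -/
noncomputable def breve {M N : ℕ} (h : Fin M → ℂ) (σa : ℝ)
    (wh : Fin N → Fin M → ℂ) (αh : ℝ) (w : Fin N → Fin M → ℂ) (α : ℝ) : ℝ :=
  2 * (1 - αh ^ 2) *
      ((∑ η, ((starRingEnd ℂ) (hermInner h (wh η)) * hermInner h (w η)).re) + σa ^ 2) -
    rfPower h σa wh * (1 - αh ^ 2) ^ 2 / (1 - α ^ 2)

set_option maxHeartbeats 1000000

lemma rfPower_nonneg {M N : ℕ} (h : Fin M → ℂ) (σa : ℝ) (w : Fin N → Fin M → ℂ) :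
    0 ≤ rfPower h σa w := by
  unfold rfPower
  positivity

lemma hermInner_sq_le {M : ℕ} (h v : Fin M → ℂ) :
    ‖hermInner h v‖ ^ 2 ≤ (∑ i, ‖h i‖ ^ 2) * (∑ i, ‖v i‖ ^ 2) := by
  have h1 : ‖hermInner h v‖ ≤ ∑ i, ‖h i‖ * ‖v i‖ := by
    refine (norm_sum_le _ _).trans_eq ?_
    refine Finset.sum_congr rfl fun i _ => ?_
    rw [norm_mul, Complex.norm_conj]
  have h2 : (∑ i, ‖h i‖ * ‖v i‖) ^ 2 ≤
      (∑ i, ‖h i‖ ^ 2) * (∑ i, ‖v i‖ ^ 2) :=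
    Finset.sum_mul_sq_le_sq_mul_sq _ _ _
  calc ‖hermInner h v‖ ^ 2
      ≤ (∑ i, ‖h i‖ * ‖v i‖) ^ 2 := by
        refine pow_le_pow_left₀ (norm_nonneg _) h1 2
    _ ≤ _ := h2

/-- Tightness of the surrogate at the linearization point. -/
lemma breve_tight {M N : ℕ} (h : Fin M → ℂ) (σa : ℝ)
    (wh : Fin N → Fin M → ℂ) (αh : ℝ) (hαh : αh ∈ Set.Ioo (0:ℝ) 1) :
    breve h σa wh αh wh αh = (1 - αh ^ 2) * rfPower h σa wh := by
  have ha : (0:ℝ) < 1 - αh ^ 2 := by nlinarith [hαh.1, hαh.2]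
  have hre : (∑ η, ((starRingEnd ℂ) (hermInner h (wh η)) * hermInner h (wh η)).re)
      = ∑ η, ‖hermInner h (wh η)‖ ^ 2 := by
    refine Finset.sum_congr rfl fun η _ => ?_
    rw [← Complex.normSq_eq_conj_mul_self, Complex.sq_norm]
    simp
  unfold breve rfPower
  rw [hre]
  have : (0:ℝ) ≠ 1 - αh ^ 2 := ne_of_lt ha
  field_simp
  ring

/-- The surrogate minorizes the true harvested energy. -/
lemma breve_le {M N : ℕ} (h : Fin M → ℂ) (σa : ℝ)
    (wh : Fin N → Fin M → ℂ) (αh : ℝ) (hαh : αh ∈ Set.Ioo (0:ℝ) 1)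
    (w : Fin N → Fin M → ℂ) (α : ℝ) (hα : α ∈ Set.Ioo (0:ℝ) 1) :
    breve h σa wh αh w α ≤ (1 - α ^ 2) * rfPower h σa w := by
  set a : ℝ := 1 - αh ^ 2 with ha_def
  set t : ℝ := 1 - α ^ 2 with ht_def
  have ha : (0:ℝ) < a := by nlinarith [hαh.1, hαh.2]
  have ht : (0:ℝ) < t := by nlinarith [hα.1, hα.2]
  set X : ℝ := ∑ η, ‖hermInner h (wh η)‖ ^ 2 with hX_def
  set Y : ℝ := ∑ η, ‖hermInner h (w η)‖ ^ 2 with hY_def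
  set A : ℝ := ∑ η, ‖hermInner h (wh η)‖ * ‖hermInner h (w η)‖ with hA_def
  have hXnn : 0 ≤ X := Finset.sum_nonneg fun _ _ => sq_nonneg _
  have hYnn : 0 ≤ Y := Finset.sum_nonneg fun _ _ => sq_nonneg _
  have hAnn : 0 ≤ A := Finset.sum_nonneg fun _ _ =>
    mul_nonneg (norm_nonneg _) (norm_nonneg _)
  have hS : (∑ η, ((starRingEnd ℂ) (hermInner h (wh η)) * hermInner h (w η)).re) ≤ A := by
    refine Finset.sum_le_sum fun η _ => ?_
    calc ((starRingEnd ℂ) (hermInner h (wh η)) * hermInner h (w η)).re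
        ≤ ‖(starRingEnd ℂ) (hermInner h (wh η)) * hermInner h (w η)‖ :=
          Complex.re_le_norm _
      _ = ‖hermInner h (wh η)‖ * ‖hermInner h (w η)‖ := by
          rw [norm_mul, Complex.norm_conj]
  have hCS : A ^ 2 ≤ X * Y := by
    have := Finset.sum_mul_sq_le_sq_mul_sq Finset.univ
      (fun η => ‖hermInner h (wh η)‖) (fun η => ‖hermInner h (w η)‖)
    simpa [hA_def, hX_def, hY_def] using this
  have h2A : 2 * A ≤ X + Y := by
    rw [hA_def, hX_def, hY_def, Finset.mul_sum, ← Finset.sum_add_distrib]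
    refine Finset.sum_le_sum fun η _ => ?_
    nlinarith [sq_nonneg (‖hermInner h (wh η)‖ - ‖hermInner h (w η)‖)]
  set S : ℝ := ∑ η, ((starRingEnd ℂ) (hermInner h (wh η)) * hermInner h (w η)).re with hS_def
  have hx : rfPower h σa wh = X + σa ^ 2 := rfl
  have hp : rfPower h σa w = Y + σa ^ 2 := rfl
  have hB : (A + σa ^ 2) ^ 2 ≤ (X + σa ^ 2) * (Y + σa ^ 2) := by
    nlinarith [sq_nonneg σa, hCS, h2A]
  unfold breve
  rw [hx, hp, ← hS_def, ← ha_def, ← ht_def]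
  rcases eq_or_lt_of_le (by positivity : (0:ℝ) ≤ X + σa ^ 2) with hx0 | hx0
  · -- x = 0 : X = 0 and σa = 0, hence A = 0 and S ≤ 0
    have hA0 : A = 0 := by nlinarith [sq_nonneg A]
    have hS0 : S ≤ 0 := hS.trans_eq hA0
    rw [← hx0]
    have : 2 * a * (S + σa ^ 2) ≤ 0 := by nlinarith [sq_nonneg σa]
    have hr : (0:ℝ) * a ^ 2 / t = 0 := by simp
    rw [hr]
    nlinarith [mul_nonneg (le_of_lt ht) (by positivity : (0:ℝ) ≤ Y + σa ^ 2)]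
  · -- x > 0
    rw [sub_le_iff_le_add, ← sub_le_iff_le_add', le_div_iff₀ ht]
    have h1 : 0 ≤ (t * (A + σa ^ 2) - a * (X + σa ^ 2)) ^ 2 := sq_nonneg _
    have h2 : 0 ≤ t ^ 2 * ((X + σa ^ 2) * (Y + σa ^ 2) - (A + σa ^ 2) ^ 2) :=
      mul_nonneg (sq_nonneg _) (by linarith)
    have h3 : 0 ≤ 2 * a * t * (X + σa ^ 2) * ((A + σa ^ 2) - (S + σa ^ 2)) := by
      apply mul_nonneg
      · positivity
      · linarith
    have hexp : (X + σa ^ 2) * a ^ 2 * (X + σa ^ 2)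
        - (2 * a * (S + σa ^ 2) - t * (Y + σa ^ 2)) * t * (X + σa ^ 2)
        = (t * (A + σa ^ 2) - a * (X + σa ^ 2)) ^ 2
          + t ^ 2 * ((X + σa ^ 2) * (Y + σa ^ 2) - (A + σa ^ 2) ^ 2)
          + 2 * a * t * (X + σa ^ 2) * ((A + σa ^ 2) - (S + σa ^ 2)) := by ring
    have key : (2 * a * (S + σa ^ 2) - t * (Y + σa ^ 2)) * t * (X + σa ^ 2)
        ≤ (X + σa ^ 2) * a ^ 2 * (X + σa ^ 2) := by linarith
    exact le_of_mul_le_mul_right key hx0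

/-- Convergence of Algorithm 1: along iterates that never decrease the
surrogate built at the current point, the true sum-harvested-energy objective
is nondecreasing, bounded above by `∑ ζ_{n₁}(‖h_{n₁}‖² P + σa²)`, and hence
converges. -/
theorem path_following_convergence (M N N₁ : ℕ) (hM : 0 < M) (hN : 0 < N)
    (hN₁ : 0 < N₁)
    (h : Fin N₁ → Fin M → ℂ) (ζ : Fin N₁ → ℝ) (hζ : ∀ n, 0 ≤ ζ n) (σa : ℝ)
    (P : ℝ) (hP : 0 ≤ P)
    (w : ℕ → Fin N → Fin M → ℂ) (α : ℕ → Fin N₁ → ℝ)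
    (hα : ∀ κ n, α κ n ∈ Set.Ioo (0 : ℝ) 1)
    (hpow : ∀ κ, (∑ n, ∑ i, ‖w κ n i‖ ^ 2) ≤ P)
    (himp : ∀ κ,
      (∑ n, ζ n * breve (h n) σa (w κ) (α κ n) (w (κ + 1)) (α (κ + 1) n)) ≥
        (∑ n, ζ n * breve (h n) σa (w κ) (α κ n) (w κ) (α κ n))) :
    Monotone (fun κ => ∑ n, ζ n * ((1 - α κ n ^ 2) * rfPower (h n) σa (w κ))) ∧
    (∀ κ, (∑ n, ζ n * ((1 - α κ n ^ 2) * rfPower (h n) σa (w κ))) ≤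
        ∑ n, ζ n * ((∑ i, ‖h n i‖ ^ 2) * P + σa ^ 2)) ∧
    ∃ L : ℝ,
      Filter.Tendsto (fun κ => ∑ n, ζ n * ((1 - α κ n ^ 2) * rfPower (h n) σa (w κ)))
        Filter.atTop (nhds L):= by
  set F : ℕ → ℝ := fun κ => ∑ n, ζ n * ((1 - α κ n ^ 2) * rfPower (h n) σa (w κ)) with hF
  have hmono : Monotone F := by
    apply monotone_nat_of_le_succ
    intro κ
    have step1 : F κ = ∑ n, ζ n * breve (h n) σa (w κ) (α κ n) (w κ) (α κ n) := by
      refine Finset.sum_congr rfl fun n _ => ?_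
      rw [breve_tight _ _ _ _ (hα κ n)]
    have step3 : (∑ n, ζ n * breve (h n) σa (w κ) (α κ n) (w (κ + 1)) (α (κ + 1) n)) ≤
        F (κ + 1) := by
      refine Finset.sum_le_sum fun n _ => ?_
      exact mul_le_mul_of_nonneg_left
        (breve_le _ _ _ _ (hα κ n) _ _ (hα (κ + 1) n)) (hζ n)
    calc F κ = _ := step1
      _ ≤ _ := himp κ
      _ ≤ F (κ + 1) := step3
  have hbd : ∀ κ, F κ ≤ ∑ n, ζ n * ((∑ i, ‖h n i‖ ^ 2) * P + σa ^ 2) := by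
    intro κ
    refine Finset.sum_le_sum fun n _ => mul_le_mul_of_nonneg_left ?_ (hζ n)
    have hhn : (0:ℝ) ≤ ∑ i, ‖h n i‖ ^ 2 :=
      Finset.sum_nonneg fun _ _ => sq_nonneg _
    have hp_le : rfPower (h n) σa (w κ) ≤ (∑ i, ‖h n i‖ ^ 2) * P + σa ^ 2 := by
      unfold rfPower
      have hsum : (∑ η, ‖hermInner (h n) (w κ η)‖ ^ 2) ≤
          (∑ i, ‖h n i‖ ^ 2) * P := by
        calc (∑ η, ‖hermInner (h n) (w κ η)‖ ^ 2)
            ≤ ∑ η, (∑ i, ‖h n i‖ ^ 2) * (∑ i, ‖w κ η i‖ ^ 2) :=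
              Finset.sum_le_sum fun η _ => hermInner_sq_le _ _
          _ = (∑ i, ‖h n i‖ ^ 2) * ∑ η, ∑ i, ‖w κ η i‖ ^ 2 := by
              rw [Finset.mul_sum]
          _ ≤ (∑ i, ‖h n i‖ ^ 2) * P :=
              mul_le_mul_of_nonneg_left (hpow κ) hhn
      linarith
    have h1 : 1 - α κ n ^ 2 ≤ 1 := by nlinarith [(hα κ n).1]
    calc (1 - α κ n ^ 2) * rfPower (h n) σa (w κ)
        ≤ 1 * rfPower (h n) σa (w κ) :=
          mul_le_mul_of_nonneg_right h1 (rfPower_nonneg _ _ _)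
      _ = rfPower (h n) σa (w κ) := one_mul _
      _ ≤ _ := hp_le
  refine ⟨hmono, hbd, ?_⟩
  refine ⟨⨆ κ, F κ, tendsto_atTop_ciSup hmono ?_⟩
  exact ⟨∑ n, ζ n * ((∑ i, ‖h n i‖ ^ 2) * P + σa ^ 2), by
    rintro x ⟨κ, rfl⟩; exact hbd κ⟩
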